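/- There do not exist two latin squares of order 5 that agree in exactly 2 cells and differ in all the remaining 23 cells in such a way that together with two further latin squares they form a 4-way latin square; precisely, 2 ∉ I⁴[5]: there is no 4-way latin square of order 5 with exactly 2 fixed cells. -/

import Mathlib

/-- A μ-way latin square of order n: μ latin squares on symbols `Fin n` such that
in every cell the μ entries are all equal or pairwise distinct. -/
def IsMuWayLatinSquare {μ n : ℕ} (L : Fin μ → Fin n → Fin n → Fin n) : Prop :=
  (∀ m i, Function.Injective (L m i)) ∧
  (∀ m j, Function.Injective (fun i => L m i j)) ∧
  (∀ i j, (∀ a b, L a i j = L b i j) ∨ Function.Injective (fun a => L a i j))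

/-- A cell is fixed when the μ entries there coincide. -/
def IsFixedCell {μ n : ℕ} (L : Fin μ → Fin n → Fin n → Fin n) (i j : Fin n) : Prop :=
  ∀ a b, L a i j = L b i j

instance {μ n : ℕ} (L : Fin μ → Fin n → Fin n → Fin n) (i j : Fin n) :
    Decidable (IsFixedCell L i j) :=
  inferInstanceAs (Decidable (∀ a b, L a i j = L b i j))

/-- The number of fixed cells. -/
def numFixed {μ n : ℕ} (L : Fin μ → Fin n → Fin n → Fin n) : ℕ :=
  (Finset.univ.filter fun p : Fin n × Fin n => IsFixedCell L p.1 p.2).card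

/-- The number of fixed cells in row `i`. -/
def rowFixed {μ n : ℕ} (L : Fin μ → Fin n → Fin n → Fin n) (i : Fin n) : ℕ :=
  (Finset.univ.filter fun j : Fin n => IsFixedCell L i j).card

/-- The intersection spectrum `I^μ[n]`. -/
def Spectrum (μ n : ℕ) : Set ℕ :=
  {k | ∃ L : Fin μ → Fin n → Fin n → Fin n, IsMuWayLatinSquare L ∧ numFixed L = k}

/-- Pigeonhole: no injective `Fin 4 → Fin 5` avoiding two distinct values. -/
lemma no_avoid (v1 v2 : Fin 5) (hv : v1 ≠ v2) (f : Fin 4 → Fin 5)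
    (hf : Function.Injective f) (h1 : ∀ a, f a ≠ v1) (h2 : ∀ a, f a ≠ v2) : False := by
  have hsub : Finset.image f Finset.univ ⊆ ({v1, v2} : Finset (Fin 5))ᶜ := by
    intro x hx
    simp only [Finset.mem_image, Finset.mem_univ, true_and] at hx
    obtain ⟨a, rfl⟩ := hx
    simp [h1 a, h2 a]
  have hcard := Finset.card_le_card hsub
  rw [Finset.card_image_of_injective _ hf, Finset.card_compl,
    Finset.card_insert_of_notMem (by simpa using hv)] at hcard
  simp at hcard

/-- For any two elements of `Fin 5` there is a third. -/
lemma exists_third (a b : Fin 5) : ∃ c : Fin 5, c ≠ a ∧ c ≠ b := by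
  revert a b; decide

theorem stmt_11 : (2 : ℕ) ∉ Spectrum 4 5 := by
  rintro ⟨L, ⟨hrow, hcol, hcell⟩, hnum⟩
  obtain ⟨p, q, hpq, hset⟩ := Finset.card_eq_two.mp hnum
  have hfix : ∀ i j : Fin 5, IsFixedCell L i j ↔ ((i, j) = p ∨ (i, j) = q) := by
    intro i j
    constructor
    · intro h
      have : (i, j) ∈ Finset.univ.filter
          (fun r : Fin 5 × Fin 5 => IsFixedCell L r.1 r.2) :=
        Finset.mem_filter.mpr ⟨Finset.mem_univ _, h⟩
      rw [hset] at this
      simpa using this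
    · intro h
      have : (i, j) ∈ ({p, q} : Finset (Fin 5 × Fin 5)) := by simpa using h
      rw [← hset] at this
      exact (Finset.mem_filter.mp this).2
  have hpfix : IsFixedCell L p.1 p.2 := (hfix p.1 p.2).mpr (Or.inl rfl)
  have hqfix : IsFixedCell L q.1 q.2 := (hfix q.1 q.2).mpr (Or.inr rfl)
  set r1 := p.1 with hr1
  set c1 := p.2 with hc1
  set r2 := q.1 with hr2
  set c2 := q.2 with hc2
  set v1 := L 0 r1 c1 with hv1def
  set v2 := L 0 r2 c2 with hv2def
  have hv1 : ∀ a, L a r1 c1 = v1 := fun a => hpfix a 0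
  have hv2 : ∀ a, L a r2 c2 = v2 := fun a => hqfix a 0
  -- injectivity of a cell's entries for non-fixed cells
  have hinj : ∀ i j : Fin 5, (i, j) ≠ p → (i, j) ≠ q →
      Function.Injective (fun a : Fin 4 => L a i j) := by
    intro i j hip hiq
    rcases hcell i j with h | h
    · exact absurd ((hfix i j).mp h) (by simp [hip, hiq])
    · exact h
  by_cases hr : r1 = r2
  · -- same row: c1 ≠ c2, v1 ≠ v2, pick third column
    have hc : c1 ≠ c2 := fun h => hpq (Prod.ext hr h)
    have hv : v1 ≠ v2 := by
      intro h
      exact hc (hrow 0 r1 (by rw [← hv1def, h, hv2def, hr]))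
    obtain ⟨j, hj1, hj2⟩ := exists_third c1 c2
    refine no_avoid v1 v2 hv (fun a => L a r1 j)
      (hinj r1 j (by simp [Prod.ext_iff, hj1, ← hr1, ← hc1, ← hr2, ← hc2]) (by simp [Prod.ext_iff, hr, hj2, ← hr1, ← hc1, ← hr2, ← hc2]))
      (fun a h => hj1 (hrow a r1 (h.trans (hv1 a).symm)))
      (fun a h => hj2 (hrow a r1 (by
        rw [show L a r1 j = v2 from h, hr]; exact (hv2 a).symm)))
  · by_cases hc : c1 = c2
    · -- same column: v1 ≠ v2, pick third row
      have hv : v1 ≠ v2 := by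
        intro h
        refine hr (hcol 0 c1 ?_)
        show L 0 r1 c1 = L 0 r2 c1
        rw [hv1 0, h, hc]
      obtain ⟨i, hi1, hi2⟩ := exists_third r1 r2
      refine no_avoid v1 v2 hv (fun a => L a i c1)
        (hinj i c1 (by simp [Prod.ext_iff, hi1, ← hr1, ← hc1, ← hr2, ← hc2]) (by simp [Prod.ext_iff, hi2, ← hr1, ← hc1, ← hr2, ← hc2]))
        (fun a h => hi1 (hcol a c1 (h.trans (hv1 a).symm)))
        (fun a h => hi2 (hcol a c1 (by
          show L a i c1 = L a r2 c1
          have h' : L a i c1 = v2 := h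
          rw [hc] at h' ⊢
          rw [h']; exact (hv2 a).symm)))
    · by_cases hv : v1 = v2
      · -- same symbol in distinct rows and columns: track it in a third row
        obtain ⟨i, hi1, hi2⟩ := exists_third r1 r2
        have hsurj : ∀ a : Fin 4, ∃ j, L a i j = v1 := fun a =>
          (Finite.injective_iff_surjective.mp (hrow a i)) v1
        choose f hf using hsurj
        have hne1 : ∀ a, f a ≠ c1 := by
          intro a h
          refine hi1 (hcol a c1 ?_)
          show L a i c1 = L a r1 c1
          exact (h ▸ hf a).trans (hv1 a).symm
        have hne2 : ∀ a, f a ≠ c2 := by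
          intro a h
          refine hi2 (hcol a c2 ?_)
          show L a i c2 = L a r2 c2
          exact (h ▸ hf a).trans (hv.trans (hv2 a).symm)
        have hfinj : Function.Injective f := by
          intro a b hab
          refine hinj i (f a) (by simp [Prod.ext_iff, hi1, ← hr1, ← hc1, ← hr2, ← hc2]) (by simp [Prod.ext_iff, hi2, ← hr1, ← hc1, ← hr2, ← hc2]) ?_
          show L a i (f a) = L b i (f a)
          rw [hf a, hab, hf b]
        exact no_avoid c1 c2 hc f hfinj hne1 hne2
      · -- distinct rows, columns, symbols: use cell (r2, c1)
        refine no_avoid v1 v2 hv (fun a => L a r2 c1)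
          (hinj r2 c1 (by simp [Prod.ext_iff, hr, Ne.symm hr, ← hr1, ← hc1, ← hr2, ← hc2]) (by simp [Prod.ext_iff, hc, ← hr1, ← hc1, ← hr2, ← hc2]))
          (fun a h => hr (hcol a c1 (by
            show L a r1 c1 = L a r2 c1
            exact (hv1 a).trans (show L a r2 c1 = v1 from h).symm)))
          (fun a h => hc (hrow a r2 (h.trans (hv2 a).symm)))
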